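/- Lemma 4.5 (classical-expectation version). Let ξ be a real random variable with E[ξ²] ≥ 1 (and E[ξ²] < ∞), and let p ≥ 2 and C > 0. Then E[min{|ξ|^p, C^{p−2}·ξ²}] ≥ min{1, 2C^{p−2}/p}. Moreover, the proof rests on the pointwise inequality min{|x|^{p/2}, C^{p−2}|x|} ≥ min{1, 2C^{p−2}/p}·f₀(x) for all x ∈ ℝ, where f₀(x) := ∫₀^{|x|} (p/2)·min{y^{p/2−1}, 1} dy, together with the facts that f₀ is convex on ℝ and f₀(1) = 1. -/

import Mathlib

open MeasureTheory Set

noncomputable section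

/-- The auxiliary convex function `f₀(x) = ∫₀^{|x|} (p/2) min{y^{p/2-1}, 1} dy`. -/
def f0 (p x : ℝ) : ℝ := ∫ y in (0:ℝ)..|x|, p / 2 * min (y ^ (p / 2 - 1)) 1

lemma aux_cont {p : ℝ} (hp : 2 ≤ p) :
    Continuous (fun y : ℝ => p / 2 * min (y ^ (p / 2 - 1)) 1) :=
  continuous_const.mul ((Real.continuous_rpow_const (by linarith)).min continuous_const)

lemma F_eval {p : ℝ} (hp : 2 ≤ p) {t : ℝ} (ht : 0 ≤ t) :
    (∫ y in (0:ℝ)..t, p / 2 * min (y ^ (p / 2 - 1)) 1)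
      = if t ≤ 1 then t ^ (p / 2) else 1 + p / 2 * (t - 1) := by
  have hq0 : (0:ℝ) < p / 2 := by linarith
  have key : ∀ s : ℝ, 0 ≤ s → s ≤ 1 →
      (∫ y in (0:ℝ)..s, p / 2 * min (y ^ (p / 2 - 1)) 1) = s ^ (p / 2) := by
    intro s hs0 hs1
    rw [intervalIntegral.integral_congr (g := fun y => p / 2 * y ^ (p / 2 - 1))
        (by
          intro y hy
          rw [Set.uIcc_of_le hs0] at hy
          have h1 : y ^ (p / 2 - 1) ≤ 1 :=
            Real.rpow_le_one hy.1 (hy.2.trans hs1) (by linarith)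
          simp [min_eq_left h1])]
    rw [intervalIntegral.integral_const_mul, integral_rpow (Or.inl (by linarith))]
    have h2 : p / 2 - 1 + 1 = p / 2 := by ring
    rw [h2, Real.zero_rpow hq0.ne']
    field_simp
    ring
  split_ifs with h
  · exact key t ht h
  · push_neg at h
    have hint1 : IntervalIntegrable (fun y : ℝ => p / 2 * min (y ^ (p / 2 - 1)) 1)
        volume 0 1 := (aux_cont hp).intervalIntegrable _ _
    have hint2 : IntervalIntegrable (fun y : ℝ => p / 2 * min (y ^ (p / 2 - 1)) 1)
        volume 1 t := (aux_cont hp).intervalIntegrable _ _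
    rw [← intervalIntegral.integral_add_adjacent_intervals hint1 hint2,
      key 1 zero_le_one le_rfl, Real.one_rpow]
    have : (∫ y in (1:ℝ)..t, p / 2 * min (y ^ (p / 2 - 1)) 1)
        = ∫ _y in (1:ℝ)..t, p / 2 := by
      apply intervalIntegral.integral_congr
      intro y hy
      rw [Set.uIcc_of_le h.le] at hy
      have h1 : (1:ℝ) ≤ y ^ (p / 2 - 1) := Real.one_le_rpow hy.1 (by linarith)
      simp [min_eq_right h1]
    rw [this, intervalIntegral.integral_const, smul_eq_mul]
    ring

lemma key_pointwise {p C' : ℝ} (hp : 2 ≤ p) (hC' : 0 < C') {t : ℝ} (ht : 0 ≤ t) :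
    min 1 (2 * C' / p) * (1 + p / 2 * (t - 1)) ≤ min (t ^ (p / 2)) (C' * t) := by
  have hp0 : (0:ℝ) < p := by linarith
  have hm0 : 0 ≤ min 1 (2 * C' / p) := le_min zero_le_one (by positivity)
  have hm1 : min 1 (2 * C' / p) ≤ 1 := min_le_left _ _
  have hm2 : min 1 (2 * C' / p) ≤ 2 * C' / p := min_le_right _ _
  set m := min 1 (2 * C' / p) with hm
  set X := 1 + p / 2 * (t - 1) with hX
  have bern : X ≤ t ^ (p / 2) := by
    have := one_add_mul_self_le_rpow_one_add (s := t - 1) (by linarith) (p := p / 2)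
      (by linarith)
    have e : 1 + (t - 1) = t := by ring
    rw [e] at this
    exact this
  rcases le_or_gt X 0 with hXle | hXpos
  · have h1 : m * X ≤ 0 := mul_nonpos_of_nonneg_of_nonpos hm0 hXle
    exact le_min (h1.trans (Real.rpow_nonneg ht _)) (h1.trans (by positivity))
  · refine le_min ?_ ?_
    · calc m * X ≤ 1 * X := mul_le_mul_of_nonneg_right hm1 hXpos.le
        _ = X := one_mul X
        _ ≤ t ^ (p / 2) := bern
    · have e : (2 * C' / p) * X = 2 * C' / p + C' * (t - 1) := by
        field_simp [hX]
        ring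
      have h2C : 2 * C' / p ≤ C' := by
        rw [div_le_iff₀ hp0]
        nlinarith
      calc m * X ≤ (2 * C' / p) * X := mul_le_mul_of_nonneg_right hm2 hXpos.le
        _ = 2 * C' / p + C' * (t - 1) := e
        _ ≤ C' + C' * (t - 1) := by linarith
        _ = C' * t := by ring

lemma sq_rpow_half {p : ℝ} (x : ℝ) : ((x ^ 2 : ℝ)) ^ (p / 2) = |x| ^ p := by
  rw [← sq_abs, ← Real.rpow_natCast |x| 2, ← Real.rpow_mul (abs_nonneg x)]
  norm_num
  congr 1
  ring

/-- **Lemma 4.5** (classical-expectation version): if `E[ξ²] ≥ 1` then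
`E[min{|ξ|^p, C^{p-2} ξ²}] ≥ min{1, 2C^{p-2}/p}`; the proof rests on the pointwise bound
`min{|x|^{p/2}, C^{p-2}|x|} ≥ min{1, 2C^{p-2}/p} f₀(x)`, the convexity of `f₀`,
and `f₀(1) = 1`. -/
theorem truncated_moment_lower_bound
    {Ω : Type} [MeasurableSpace Ω] (P : Measure Ω) [IsProbabilityMeasure P]
    (ξ : Ω → ℝ) (hmeas : Measurable ξ)
    (hint : Integrable (fun ω => (ξ ω) ^ 2) P)
    (hvar : 1 ≤ ∫ ω, (ξ ω) ^ 2 ∂P)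
    (p C : ℝ) (hp : 2 ≤ p) (hC : 0 < C) :
    min 1 (2 * C ^ (p - 2) / p) ≤ ∫ ω, min (|ξ ω| ^ p) (C ^ (p - 2) * (ξ ω) ^ 2) ∂P ∧
    (∀ x : ℝ, min 1 (2 * C ^ (p - 2) / p) * f0 p x ≤ min (|x| ^ (p / 2)) (C ^ (p - 2) * |x|)) ∧
    ConvexOn ℝ Set.univ (f0 p) ∧
    f0 p 1 = 1 := by
  have hp0 : (0:ℝ) < p := by linarith
  set C' := C ^ (p - 2) with hC'def
  have hC' : 0 < C' := Real.rpow_pos_of_pos hC _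
  set m := min 1 (2 * C' / p) with hmdef
  have hm0 : 0 ≤ m := le_min zero_le_one (by positivity)
  have hm1 : m ≤ 1 := min_le_left _ _
  have hm2 : m ≤ 2 * C' / p := min_le_right _ _
  refine ⟨?_, ?_, ?_, ?_⟩
  · -- main integral bound
    have hptwise : ∀ ω, m * (1 + p / 2 * ((ξ ω) ^ 2 - 1))
        ≤ min (|ξ ω| ^ p) (C' * (ξ ω) ^ 2) := by
      intro ω
      have := key_pointwise (C' := C') hp hC' (sq_nonneg (ξ ω))
      rwa [sq_rpow_half (ξ ω)] at this
    have hlhs_int : Integrable (fun ω => m * (1 + p / 2 * ((ξ ω) ^ 2 - 1))) P :=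
      (((integrable_const (1:ℝ)).add
        ((hint.sub (integrable_const 1)).const_mul (p / 2))).const_mul m)
    have hmin_int : Integrable (fun ω => min (|ξ ω| ^ p) (C' * (ξ ω) ^ 2)) P := by
      apply Integrable.mono' (hint.const_mul C')
      · exact (((((Real.continuous_rpow_const (by linarith : (0:ℝ) ≤ p)).measurable).comp
          hmeas.abs).min (hmeas.pow_const 2 |>.const_mul C')).aestronglyMeasurable)
      · refine Filter.Eventually.of_forall fun ω => ?_
        have h1 : 0 ≤ min (|ξ ω| ^ p) (C' * (ξ ω) ^ 2) :=
          le_min (Real.rpow_nonneg (abs_nonneg _) _) (by positivity)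
        rw [Real.norm_eq_abs, abs_of_nonneg h1]
        exact min_le_right _ _
    have hle := integral_mono hlhs_int hmin_int hptwise
    have hint1 : Integrable (fun ω => (ξ ω) ^ 2 - 1) P := hint.sub (integrable_const 1)
    have hint2 : Integrable (fun ω => p / 2 * ((ξ ω) ^ 2 - 1)) P := hint1.const_mul _
    have heq : (∫ ω, m * (1 + p / 2 * ((ξ ω) ^ 2 - 1)) ∂P)
        = m * (1 + p / 2 * ((∫ ω, (ξ ω) ^ 2 ∂P) - 1)) := by
      rw [integral_const_mul, integral_add (integrable_const 1) hint2,
        integral_const_mul, integral_sub hint (integrable_const 1)]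
      simp
    rw [heq] at hle
    refine le_trans ?_ hle
    have h1 : (1:ℝ) ≤ 1 + p / 2 * ((∫ ω, (ξ ω) ^ 2 ∂P) - 1) := by nlinarith
    calc m = m * 1 := (mul_one m).symm
      _ ≤ m * (1 + p / 2 * ((∫ ω, (ξ ω) ^ 2 ∂P) - 1)) :=
        mul_le_mul_of_nonneg_left h1 hm0
  · -- pointwise bound for f0
    intro x
    rw [f0, F_eval hp (abs_nonneg x)]
    set t := |x| with htdef
    have ht : 0 ≤ t := abs_nonneg x
    split_ifs with h
    · refine le_min ?_ ?_
      · calc m * t ^ (p / 2) ≤ 1 * t ^ (p / 2) :=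
          mul_le_mul_of_nonneg_right hm1 (Real.rpow_nonneg ht _)
          _ = t ^ (p / 2) := one_mul _
      · have htq : t ^ (p / 2) ≤ t := by
          rcases eq_or_lt_of_le ht with h0 | h0
          · rw [← h0, Real.zero_rpow (by positivity : (p/2) ≠ 0)]
          · calc t ^ (p / 2) ≤ t ^ (1:ℝ) :=
              Real.rpow_le_rpow_of_exponent_ge h0 h (by linarith)
              _ = t := Real.rpow_one t
        have hmC : m ≤ C' := hm2.trans (by rw [div_le_iff₀ hp0]; nlinarith)
        exact mul_le_mul hmC htq (Real.rpow_nonneg ht _) hC'.le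
    · exact key_pointwise hp hC' ht
  · -- convexity
    set g : ℝ → ℝ := fun y => p / 2 * min (y ^ (p / 2 - 1)) 1 with hg
    set G : ℝ → ℝ := fun t => ∫ y in (0:ℝ)..t, g y with hG
    have hderiv : ∀ t : ℝ, HasDerivAt G (g t) t := fun t =>
      intervalIntegral.integral_hasDerivAt_right
        ((aux_cont hp).intervalIntegrable _ _)
        ((aux_cont hp).stronglyMeasurableAtFilter _ _)
        (aux_cont hp).continuousAt
    have hg_nonneg : ∀ t : ℝ, 0 ≤ t → 0 ≤ g t := by
      intro t ht
      exact mul_nonneg (by linarith) (le_min (Real.rpow_nonneg ht _) zero_le_one)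
    have hGcont : ContinuousOn G (Ici 0) :=
      fun t _ => ((hderiv t).continuousAt).continuousWithinAt
    have hGdiff : DifferentiableOn ℝ G (interior (Ici (0:ℝ))) :=
      fun t _ => ((hderiv t).differentiableAt).differentiableWithinAt
    have hderiv_mono : MonotoneOn (deriv G) (interior (Ici (0:ℝ))) := by
      rw [interior_Ici]
      intro a ha b hb hab
      rw [(hderiv a).deriv, (hderiv b).deriv]
      refine mul_le_mul_of_nonneg_left (min_le_min ?_ le_rfl) (by linarith)
      exact Real.rpow_le_rpow (le_of_lt ha) hab (by linarith)
    have hGconv : ConvexOn ℝ (Ici 0) G :=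
      MonotoneOn.convexOn_of_deriv (convex_Ici 0) hGcont hGdiff hderiv_mono
    have hGmono : MonotoneOn G (Ici 0) := by
      apply monotoneOn_of_deriv_nonneg (convex_Ici 0) hGcont hGdiff
      intro t htmem
      rw [interior_Ici] at htmem
      rw [(hderiv t).deriv]
      exact hg_nonneg t htmem.le
    have himg : (abs : ℝ → ℝ) '' Set.univ = Ici 0 := by
      rw [Set.image_univ]
      ext y
      simp only [Set.mem_range, Set.mem_Ici]
      constructor
      · rintro ⟨x, rfl⟩; exact abs_nonneg x
      · intro hy; exact ⟨y, abs_of_nonneg hy⟩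
    have habs : ConvexOn ℝ Set.univ (abs : ℝ → ℝ) := by
      have := convexOn_univ_norm (E := ℝ)
      exact this
    have hcomp : ConvexOn ℝ Set.univ (G ∘ (abs : ℝ → ℝ)) :=
      ConvexOn.comp (himg ▸ hGconv) habs (himg ▸ hGmono)
    have : f0 p = G ∘ (abs : ℝ → ℝ) := by
      funext x
      rfl
    rw [this]
    exact hcomp
  · -- f0 p 1 = 1
    rw [f0, abs_one, F_eval hp zero_le_one, if_pos le_rfl, Real.one_rpow]

end
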